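/- Flip automata networks have invariant histories: for any initial configuration, the sequence of state values taken by each individual node (recording only actual state changes, in order) is independent of the choice of fair update schedule. -/

import Mathlib

open scoped Classical

/-- A flip automata network. -/
structure FAN (I S : Type*) where
  G : SimpleGraph I
  flip : I → (I → S) → S × (I → Bool)

abbrev FanConfig (I S : Type*) := (I → S) × (I → I → Bool)

def FAN.Applicable {I S : Type*} (net : FAN I S) (cfg : FanConfig I S) (v : I) : Prop :=
  ∀ u, net.G.Adj u v → cfg.2 u v = true

noncomputable def FAN.updateSet {I S : Type*} (net : FAN I S) (D : Set I)
    (cfg : FanConfig I S) : FanConfig I S :=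
  ( fun i => if i ∈ D then (net.flip i cfg.1).1 else cfg.1 i,
    fun i j =>
      if (i ∈ D ∧ (net.flip i cfg.1).2 j = true) ∨ (j ∈ D ∧ (net.flip j cfg.1).2 i = true)
      then !(cfg.2 i j) else cfg.2 i j )

/-- One step of a fair schedule: simultaneously update all applicable nodes of the
chosen subset. -/
noncomputable def FAN.stepSet {I S : Type*} (net : FAN I S) (D : Set I)
    (cfg : FanConfig I S) : FanConfig I S :=
  net.updateSet {v | v ∈ D ∧ net.Applicable cfg v} cfg

/-- Trajectory under an update schedule `ζ`. -/
noncomputable def FAN.traj {I S : Type*} (net : FAN I S) (ζ : ℕ → Set I)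
    (cfg : FanConfig I S) : ℕ → FanConfig I S
  | 0 => cfg
  | t + 1 => net.stepSet (ζ t) (FAN.traj net ζ cfg t)

/-- The predicate `p` on ℕ holds at least `n` times. -/
def HasAtLeast (p : ℕ → Prop) (n : ℕ) : Prop :=
  {t | p t}.Infinite ∨ n < {t | p t}.ncard

/-- The `n`-th value of the deduplicated (update-history) sequence of `g : ℕ → S`:
`histVal g 0` is the initial value, and `histVal g (n+1)` is the value right after the
`n`-th actual change. -/
noncomputable def histVal {S : Type*} (g : ℕ → S) : ℕ → S
  | 0 => g 0
  | n + 1 => g (Nat.nth (fun t => g (t + 1) ≠ g t) n + 1)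

namespace FanPf

section Infra

variable {I S : Type*} (net : FAN I S) (cfg : FanConfig I S) (ζ : ℕ → Set I)

/-- The trajectory, abbreviated. -/
noncomputable def tr (t : ℕ) : FanConfig I S := net.traj ζ cfg t

/-- Node `v` actually fires at step `t`. -/
def Fires (t : ℕ) (v : I) : Prop :=
  v ∈ ζ t ∧ net.Applicable (tr net cfg ζ t) v

/-- Number of times `v` has fired before time `t`. -/
noncomputable def cnt (v : I) (t : ℕ) : ℕ :=
  ((Finset.range t).filter (fun s => Fires net cfg ζ s v)).card

lemma tr_zero : tr net cfg ζ 0 = cfg := rfl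

lemma tr_succ (t : ℕ) : tr net cfg ζ (t + 1) = net.stepSet (ζ t) (tr net cfg ζ t) := rfl

lemma state_succ (t : ℕ) (v : I) :
    (tr net cfg ζ (t + 1)).1 v =
      if Fires net cfg ζ t v then (net.flip v (tr net cfg ζ t).1).1
      else (tr net cfg ζ t).1 v := by
  simp [tr_succ, FAN.stepSet, FAN.updateSet, Fires, Set.mem_setOf_eq]
  congr

lemma edge_succ (t : ℕ) (u v : I) :
    (tr net cfg ζ (t + 1)).2 u v =
      if (Fires net cfg ζ t u ∧ (net.flip u (tr net cfg ζ t).1).2 v = true) ∨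
         (Fires net cfg ζ t v ∧ (net.flip v (tr net cfg ζ t).1).2 u = true)
      then !(tr net cfg ζ t).2 u v else (tr net cfg ζ t).2 u v := by
  simp [tr_succ, FAN.stepSet, FAN.updateSet, Fires, Set.mem_setOf_eq]
  congr

variable (hor : ∀ i j, net.G.Adj i j → cfg.2 i j = !cfg.2 j i)

include hor in
lemma hor_tr : ∀ t i j, net.G.Adj i j → (tr net cfg ζ t).2 i j = !(tr net cfg ζ t).2 j i := by
  intro t
  induction t with
  | zero => exact hor
  | succ t ih =>
    intro i j hadj
    rw [edge_succ, edge_succ]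
    by_cases h : (Fires net cfg ζ t i ∧ (net.flip i (tr net cfg ζ t).1).2 j = true) ∨
        (Fires net cfg ζ t j ∧ (net.flip j (tr net cfg ζ t).1).2 i = true)
    · rw [if_pos h, if_pos h.symm, ih i j hadj]
    · rw [if_neg h, if_neg (fun hc => h hc.symm)]
      exact ih i j hadj

include hor in
lemma not_fires_adj (t : ℕ) (u v : I) (hadj : net.G.Adj u v)
    (hu : Fires net cfg ζ t u) (hv : Fires net cfg ζ t v) : False := by
  have h1 : (tr net cfg ζ t).2 u v = true := hv.2 u hadj
  have h2 : (tr net cfg ζ t).2 v u = true := hu.2 v hadj.symm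
  rw [hor_tr net cfg ζ hor t u v hadj, h2] at h1
  simp at h1

lemma cnt_zero (v : I) : cnt net cfg ζ v 0 = 0 := by simp [cnt]

lemma cnt_succ (t : ℕ) (v : I) :
    cnt net cfg ζ v (t + 1) = cnt net cfg ζ v t + if Fires net cfg ζ t v then 1 else 0 := by
  unfold cnt
  rw [Finset.range_add_one, Finset.filter_insert]
  split
  · rw [Finset.card_insert_of_notMem (by simp)]
  · rfl

lemma cnt_mono (v : I) : Monotone (cnt net cfg ζ v) := by
  apply monotone_nat_of_le_succ
  intro t
  rw [cnt_succ]
  split <;> omega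

lemma cnt_lt_of_fires {s t : ℕ} {v : I} (h : Fires net cfg ζ s v) (hst : s < t) :
    cnt net cfg ζ v s < cnt net cfg ζ v t := by
  have h1 : cnt net cfg ζ v (s + 1) = cnt net cfg ζ v s + 1 := by
    rw [cnt_succ]; simp [h]
  have h2 := cnt_mono net cfg ζ v (Nat.succ_le_of_lt hst)
  simp only [Nat.succ_eq_add_one] at h2
  omega

lemma fires_time_unique {s t : ℕ} {v : I} (hs : Fires net cfg ζ s v) (ht : Fires net cfg ζ t v)
    (h : cnt net cfg ζ v s = cnt net cfg ζ v t) : s = t := by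
  rcases lt_trichotomy s t with hlt | heq | hgt
  · exact absurd h (Nat.ne_of_lt (cnt_lt_of_fires net cfg ζ hs hlt))
  · exact heq
  · exact absurd h.symm (Nat.ne_of_lt (cnt_lt_of_fires net cfg ζ ht hgt))

lemma exists_fires_of_lt_cnt {k : ℕ} {v : I} {t : ℕ} (h : k < cnt net cfg ζ v t) :
    ∃ s < t, Fires net cfg ζ s v ∧ cnt net cfg ζ v s = k := by
  induction t with
  | zero => simp [cnt_zero] at h
  | succ t ih =>
    rw [cnt_succ] at h
    by_cases hf : Fires net cfg ζ t v
    · rw [if_pos hf] at h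
      rcases Nat.lt_or_ge k (cnt net cfg ζ v t) with h' | h'
      · obtain ⟨s, hs, h1, h2⟩ := ih h'
        exact ⟨s, Nat.lt_succ_of_lt hs, h1, h2⟩
      · have : k = cnt net cfg ζ v t := by omega
        exact ⟨t, Nat.lt_succ_self t, hf, this.symm⟩
    · rw [if_neg hf] at h
      obtain ⟨s, hs, h1, h2⟩ := ih h
      exact ⟨s, Nat.lt_succ_of_lt hs, h1, h2⟩

lemma no_fires_of_cnt_eq {a b : ℕ} {v : I} (hab : a ≤ b) (h : cnt net cfg ζ v a = cnt net cfg ζ v b)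
    {s : ℕ} (has : a ≤ s) (hsb : s < b) : ¬ Fires net cfg ζ s v := by
  intro hf
  have h1 := cnt_lt_of_fires net cfg ζ hf hsb
  have h2 := cnt_mono net cfg ζ v has
  omega

lemma cnt_const_of_no_fires {a b : ℕ} {v : I} (hab : a ≤ b)
    (h : ∀ s, a ≤ s → s < b → ¬ Fires net cfg ζ s v) :
    cnt net cfg ζ v b = cnt net cfg ζ v a := by
  obtain ⟨d, rfl⟩ := Nat.exists_eq_add_of_le hab
  induction d with
  | zero => rfl
  | succ d ih =>
    rw [← Nat.add_assoc, cnt_succ, if_neg (h _ (by omega) (by omega)), Nat.add_zero]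
    exact ih (by omega) (fun s h1 h2 => h s h1 (by omega))

lemma state_const {a b : ℕ} {v : I} (hab : a ≤ b)
    (h : ∀ s, a ≤ s → s < b → ¬ Fires net cfg ζ s v) :
    (tr net cfg ζ b).1 v = (tr net cfg ζ a).1 v := by
  obtain ⟨d, rfl⟩ := Nat.exists_eq_add_of_le hab
  induction d with
  | zero => rfl
  | succ d ih =>
    rw [← Nat.add_assoc, state_succ, if_neg (h _ (by omega) (by omega))]
    exact ih (by omega) (fun s h1 h2 => h s h1 (by omega))

lemma edge_const {a b : ℕ} {u v : I} (hab : a ≤ b)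
    (hu : ∀ s, a ≤ s → s < b → ¬ Fires net cfg ζ s u)
    (hv : ∀ s, a ≤ s → s < b → ¬ Fires net cfg ζ s v) :
    (tr net cfg ζ b).2 u v = (tr net cfg ζ a).2 u v := by
  obtain ⟨d, rfl⟩ := Nat.exists_eq_add_of_le hab
  induction d with
  | zero => rfl
  | succ d ih =>
    rw [← Nat.add_assoc, edge_succ, if_neg]
    · exact ih (by omega) (fun s h1 h2 => hu s h1 (by omega)) (fun s h1 h2 => hv s h1 (by omega))
    · rintro (⟨h1, _⟩ | ⟨h1, _⟩)
      · exact hu _ (by omega) (by omega) h1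
      · exact hv _ (by omega) (by omega) h1

/-- Discrete intermediate value property for `cnt`. -/
lemma cnt_ivt {a b : ℕ} {v : I} {j : ℕ} (hab : a ≤ b) (h1 : cnt net cfg ζ v a ≤ j)
    (h2 : j ≤ cnt net cfg ζ v b) : ∃ s, a ≤ s ∧ s ≤ b ∧ cnt net cfg ζ v s = j := by
  induction b with
  | zero =>
    have ha : a = 0 := Nat.le_zero.mp hab
    subst ha
    have := cnt_zero net cfg ζ v
    exact ⟨0, le_refl _, le_refl _, by omega⟩
  | succ b ih =>
    rcases Nat.lt_or_ge a (b + 1) with hab' | hab'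
    · have hab2 : a ≤ b := by omega
      rcases le_or_gt j (cnt net cfg ζ v b) with h3 | h3
      · obtain ⟨s, hs1, hs2, hs3⟩ := ih hab2 h3
        exact ⟨s, hs1, by omega, hs3⟩
      · -- cnt b < j ≤ cnt (b+1) ≤ cnt b + 1, so j = cnt (b+1), take s = b+1
        have := cnt_succ net cfg ζ b v
        have : cnt net cfg ζ v (b + 1) ≤ cnt net cfg ζ v b + 1 := by
          rw [cnt_succ]; split <;> omega
        exact ⟨b + 1, by omega, le_refl _, by omega⟩
    · have ha : a = b + 1 := by omega
      refine ⟨b + 1, by omega, le_refl _, ?_⟩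
      rw [← ha] at h2 ⊢
      omega

include hor in
lemma persist (t : ℕ) (v : I) (happ : net.Applicable (tr net cfg ζ t) v)
    (hnf : ¬ Fires net cfg ζ t v) : net.Applicable (tr net cfg ζ (t + 1)) v := by
  intro u hadj
  rw [edge_succ, if_neg]
  · exact happ u hadj
  · rintro (⟨h1, _⟩ | ⟨h1, _⟩)
    · -- u fires; but u is not applicable since edge u→v is true so v→u is false
      have h2 : (tr net cfg ζ t).2 u v = true := happ u hadj
      have h3 : (tr net cfg ζ t).2 v u = true := h1.2 v hadj.symm
      rw [hor_tr net cfg ζ hor t u v hadj, h3] at h2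
      simp at h2
    · exact hnf h1

include hor in
lemma eventual (hfair : ∀ i, {t | i ∈ ζ t}.Infinite) (t : ℕ) (v : I)
    (happ : net.Applicable (tr net cfg ζ t) v) :
    ∃ s, t ≤ s ∧ Fires net cfg ζ s v ∧ cnt net cfg ζ v s = cnt net cfg ζ v t := by
  obtain ⟨m, hm, htm⟩ := (hfair v).exists_gt t
  -- least s ≥ t with v ∈ ζ s
  have hex : ∃ s, t ≤ s ∧ v ∈ ζ s := ⟨m, le_of_lt htm, hm⟩
  classical
  let s₀ := Nat.find hex
  obtain ⟨hs₀t, hs₀mem⟩ : t ≤ s₀ ∧ v ∈ ζ s₀ := Nat.find_spec hex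
  have hmin : ∀ r, t ≤ r → r < s₀ → v ∉ ζ r := by
    intro r h1 h2 h3
    exact Nat.find_min hex h2 ⟨h1, h3⟩
  have hnof : ∀ r, t ≤ r → r < s₀ → ¬ Fires net cfg ζ r v := by
    intro r h1 h2 hf
    exact hmin r h1 h2 hf.1
  have happs : ∀ d, t + d ≤ s₀ → net.Applicable (tr net cfg ζ (t + d)) v := by
    intro d
    induction d with
    | zero => intro _; exact happ
    | succ d ih =>
      intro hd
      have h1 := ih (by omega)
      exact persist net cfg ζ hor (t + d) v h1 (hnof _ (by omega) (by omega))
  clear_value s₀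
  obtain ⟨d, rfl⟩ := Nat.exists_eq_add_of_le hs₀t
  refine ⟨t + d, by omega, ⟨hs₀mem, happs d (le_refl _)⟩, ?_⟩
  exact cnt_const_of_no_fires net cfg ζ (by omega) (fun s h1 h2 => hnof s h1 (by omega))

end Infra
end FanPf

namespace FanPf
section Cross

variable {I S : Type*} (net : FAN I S) (cfg : FanConfig I S) (ζ ζ' : ℕ → Set I)

lemma lt_of_cnt_lt {v : I} {s t : ℕ} (h : cnt net cfg ζ v s < cnt net cfg ζ v t) : s < t := by
  by_contra h'
  exact absurd (cnt_mono net cfg ζ v (not_lt.mp h')) (not_le.mpr h)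

/-- The `k`-th firing of `v` happens in both runs with matching local context. -/
def MatchedF (v : I) (k : ℕ) : Prop :=
  ∃ s s', Fires net cfg ζ s v ∧ Fires net cfg ζ' s' v ∧
    cnt net cfg ζ v s = k ∧ cnt net cfg ζ' v s' = k ∧
    (∀ u, net.G.Adj u v → cnt net cfg ζ u s = cnt net cfg ζ' u s') ∧
    (tr net cfg ζ s).1 v = (tr net cfg ζ' s').1 v ∧
    (∀ u, net.G.Adj u v → (tr net cfg ζ s).1 u = (tr net cfg ζ' s').1 u) ∧
    net.flip v (tr net cfg ζ s).1 = net.flip v (tr net cfg ζ' s').1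

lemma MatchedF.symm {v : I} {k : ℕ} (h : MatchedF net cfg ζ ζ' v k) :
    MatchedF net cfg ζ' ζ v k := by
  obtain ⟨s, s', h1, h2, h3, h4, h5, h6, h7, h8⟩ := h
  exact ⟨s', s, h2, h1, h4, h3, fun u hu => (h5 u hu).symm, h6.symm,
    fun u hu => (h7 u hu).symm, h8.symm⟩

/-- Cross-run equality of states, given that all prior firings of `w` are matched. -/
lemma state_eq_of_matched (w : I) {τ τ' : ℕ}
    (hc : cnt net cfg ζ w τ = cnt net cfg ζ' w τ')
    (hm : ∀ m, m < cnt net cfg ζ w τ → MatchedF net cfg ζ ζ' w m) :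
    (tr net cfg ζ τ).1 w = (tr net cfg ζ' τ').1 w := by
  rcases Nat.eq_zero_or_pos (cnt net cfg ζ w τ) with h0 | hpos
  · have e1 : (tr net cfg ζ τ).1 w = (tr net cfg ζ 0).1 w :=
      state_const net cfg ζ (Nat.zero_le τ) (fun s _ hs hf => by
        have := cnt_lt_of_fires net cfg ζ hf hs
        omega)
    have e2 : (tr net cfg ζ' τ').1 w = (tr net cfg ζ' 0).1 w :=
      state_const net cfg ζ' (Nat.zero_le τ') (fun s _ hs hf => by
        have := cnt_lt_of_fires net cfg ζ' hf hs
        rw [← hc] at this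
        omega)
    rw [e1, e2]; rfl
  · obtain ⟨s, s', hf, hf', hcs, hcs', _, _, _, hflip⟩ := hm _ (Nat.sub_lt hpos Nat.one_pos)
    have hsτ : s < τ := lt_of_cnt_lt net cfg ζ
      (show cnt net cfg ζ w s < cnt net cfg ζ w τ by omega)
    have hsτ' : s' < τ' := lt_of_cnt_lt net cfg ζ'
      (show cnt net cfg ζ' w s' < cnt net cfg ζ' w τ' from by rw [hcs', ← hc]; omega)
    have hc1 : cnt net cfg ζ w (s + 1) = cnt net cfg ζ w τ := by
      rw [cnt_succ, if_pos hf]; omega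
    have hc1' : cnt net cfg ζ' w (s' + 1) = cnt net cfg ζ' w τ' := by
      rw [cnt_succ, if_pos hf']; rw [← hc]; omega
    have e1 : (tr net cfg ζ τ).1 w = (tr net cfg ζ (s + 1)).1 w :=
      state_const net cfg ζ (show s + 1 ≤ τ from hsτ)
        (fun r h1 h2 => no_fires_of_cnt_eq net cfg ζ (show s + 1 ≤ τ from hsτ) hc1 h1 h2)
    have e2 : (tr net cfg ζ' τ').1 w = (tr net cfg ζ' (s' + 1)).1 w :=
      state_const net cfg ζ' (show s' + 1 ≤ τ' from hsτ')
        (fun r h1 h2 => no_fires_of_cnt_eq net cfg ζ' (show s' + 1 ≤ τ' from hsτ') hc1' h1 h2)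
    rw [e1, e2, state_succ, state_succ, if_pos hf, if_pos hf', hflip]

/-- Number of firings of `u` before `τ` in which `u` flips the edge towards `v`. -/
noncomputable def flipCount (u v : I) (τ : ℕ) : ℕ :=
  ((Finset.range τ).filter
    (fun s => Fires net cfg ζ s u ∧ (net.flip u (tr net cfg ζ s).1).2 v = true)).card

lemma edge_formula (hor : ∀ i j, net.G.Adj i j → cfg.2 i j = !cfg.2 j i)
    (u v : I) (hadj : net.G.Adj u v) (τ : ℕ) :
    (tr net cfg ζ τ).2 u v =
      xor (xor (flipCount net cfg ζ u v τ).bodd (flipCount net cfg ζ v u τ).bodd)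
        (cfg.2 u v) := by
  induction τ with
  | zero =>
    show cfg.2 u v = _
    simp [flipCount]
  | succ τ ih =>
    have hstep : ∀ a b : I, flipCount net cfg ζ a b (τ + 1) =
        flipCount net cfg ζ a b τ +
          (if Fires net cfg ζ τ a ∧ (net.flip a (tr net cfg ζ τ).1).2 b = true then 1 else 0) := by
      intro a b
      unfold flipCount
      rw [Finset.range_add_one, Finset.filter_insert]
      split
      · rw [Finset.card_insert_of_notMem (by simp)]
      · rfl
    rw [edge_succ, hstep, hstep]
    by_cases hcu : Fires net cfg ζ τ u ∧ (net.flip u (tr net cfg ζ τ).1).2 v = true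
    · have hcv : ¬ (Fires net cfg ζ τ v ∧ (net.flip v (tr net cfg ζ τ).1).2 u = true) := by
        rintro ⟨h1, _⟩
        exact not_fires_adj net cfg ζ hor τ u v hadj hcu.1 h1
      rw [if_pos (Or.inl hcu), if_pos hcu, if_neg hcv, ih, Nat.bodd_add]
      simp only [Nat.add_zero]
      generalize (flipCount net cfg ζ u v τ).bodd = A
      generalize (flipCount net cfg ζ v u τ).bodd = B
      generalize cfg.2 u v = C
      cases A <;> cases B <;> cases C <;> rfl
    · by_cases hcv : Fires net cfg ζ τ v ∧ (net.flip v (tr net cfg ζ τ).1).2 u = true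
      · rw [if_pos (Or.inr hcv), if_neg hcu, if_pos hcv, ih]
        simp only [Nat.add_zero]
        rw [Nat.bodd_add]
        generalize (flipCount net cfg ζ u v τ).bodd = A
        generalize (flipCount net cfg ζ v u τ).bodd = B
        generalize cfg.2 u v = C
        cases A <;> cases B <;> cases C <;> rfl
      · rw [if_neg (by tauto), if_neg hcu, if_neg hcv, Nat.add_zero, Nat.add_zero, ih]

/-- `flipCount` counted by firing index. -/
lemma flipCount_eq_idx (u v : I) (τ : ℕ) :
    flipCount net cfg ζ u v τ =
      ((Finset.range (cnt net cfg ζ u τ)).filter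
        (fun m => ∃ s, Fires net cfg ζ s u ∧ cnt net cfg ζ u s = m ∧
          (net.flip u (tr net cfg ζ s).1).2 v = true)).card := by
  apply Finset.card_bij (fun s _ => cnt net cfg ζ u s)
  · intro s hs
    rw [Finset.mem_filter, Finset.mem_range] at hs
    rw [Finset.mem_filter, Finset.mem_range]
    exact ⟨cnt_lt_of_fires net cfg ζ hs.2.1 hs.1, s, hs.2.1, rfl, hs.2.2⟩
  · intro s hs s2 hs2 he
    rw [Finset.mem_filter] at hs hs2
    exact fires_time_unique net cfg ζ hs.2.1 hs2.2.1 he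
  · intro m hm
    rw [Finset.mem_filter, Finset.mem_range] at hm
    obtain ⟨hmlt, s, h1, h2, h3⟩ := hm
    refine ⟨s, ?_, h2⟩
    rw [Finset.mem_filter, Finset.mem_range]
    refine ⟨lt_of_cnt_lt net cfg ζ (show cnt net cfg ζ u s < cnt net cfg ζ u τ by omega), h1, h3⟩

lemma flipCount_cross (u v : I) {τ τ' : ℕ}
    (hc : cnt net cfg ζ u τ = cnt net cfg ζ' u τ')
    (hm : ∀ m, m < cnt net cfg ζ u τ → MatchedF net cfg ζ ζ' u m) :
    flipCount net cfg ζ u v τ = flipCount net cfg ζ' u v τ' := by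
  rw [flipCount_eq_idx, flipCount_eq_idx, ← hc]
  congr 1
  apply Finset.filter_congr
  intro m hmr
  rw [Finset.mem_range] at hmr
  obtain ⟨σ, σ', hfσ, hfσ', hcσ, hcσ', _, _, _, hflip⟩ := hm m hmr
  constructor
  · rintro ⟨s, h1, h2, h3⟩
    have : s = σ := fires_time_unique net cfg ζ h1 hfσ (h2.trans hcσ.symm)
    subst this
    exact ⟨σ', hfσ', hcσ', by rw [← hflip]; exact h3⟩
  · rintro ⟨s, h1, h2, h3⟩
    have : s = σ' := fires_time_unique net cfg ζ' h1 hfσ' (h2.trans hcσ'.symm)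
    subst this
    exact ⟨σ, hfσ, hcσ, by rw [hflip]; exact h3⟩

/-- Cross-run equality of edges. -/
lemma edge_eq_of_matched (hor : ∀ i j, net.G.Adj i j → cfg.2 i j = !cfg.2 j i)
    (u v : I) (hadj : net.G.Adj u v) {τ τ' : ℕ}
    (hcu : cnt net cfg ζ u τ = cnt net cfg ζ' u τ')
    (hcv : cnt net cfg ζ v τ = cnt net cfg ζ' v τ')
    (hmu : ∀ m, m < cnt net cfg ζ u τ → MatchedF net cfg ζ ζ' u m)
    (hmv : ∀ m, m < cnt net cfg ζ v τ → MatchedF net cfg ζ ζ' v m) :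
    (tr net cfg ζ τ).2 u v = (tr net cfg ζ' τ').2 u v := by
  rw [edge_formula net cfg ζ hor u v hadj, edge_formula net cfg ζ' hor u v hadj,
    flipCount_cross net cfg ζ ζ' u v hcu hmu,
    flipCount_cross net cfg ζ ζ' v u hcv hmv]

end Cross
end FanPf

namespace FanPf
section Master

variable {I S : Type*} (net : FAN I S) (cfg : FanConfig I S) (ζ ζ' : ℕ → Set I)

theorem master
    (hloc : ∀ i (s s' : I → S), s i = s' i → (∀ u, net.G.Adj u i → s u = s' u) →
      net.flip i s = net.flip i s')
    (hlf : ∀ v, (net.G.neighborSet v).Finite)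
    (hor : ∀ i j, net.G.Adj i j → cfg.2 i j = !cfg.2 j i)
    (hfair' : ∀ i, {t | i ∈ ζ' t}.Infinite) :
    ∀ t v, Fires net cfg ζ t v → MatchedF net cfg ζ ζ' v (cnt net cfg ζ v t) := by
  intro t
  induction t using Nat.strong_induction_on with
  | _ t IH =>
  intro v hf
  have H1 : ∀ w m, m < cnt net cfg ζ w t → MatchedF net cfg ζ ζ' w m := by
    intro w m hm
    obtain ⟨s, hst, hfs, hcs⟩ := exists_fires_of_lt_cnt net cfg ζ hm
    exact hcs ▸ IH s hst w hfs
  -- SubB: a neighbour u cannot complete its (cnt ζ u t)-th firing in ζ' while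
  -- v's ζ'-count is still at most cnt ζ v t.
  have SubB : ∀ u, net.G.Adj u v → ∀ s', Fires net cfg ζ' s' u →
      cnt net cfg ζ' u s' = cnt net cfg ζ u t →
      cnt net cfg ζ' v s' ≤ cnt net cfg ζ v t → False := by
    intro u hadj s' hfs' hcu' hjle
    have hjk : cnt net cfg ζ' v s' ≤ cnt net cfg ζ v t := hjle
    have key : ∃ σ, σ ≤ t ∧ cnt net cfg ζ u σ = cnt net cfg ζ u t ∧
        cnt net cfg ζ v σ ≤ cnt net cfg ζ' v s' := by
      rcases Nat.eq_zero_or_pos (cnt net cfg ζ u t) with h0 | hpos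
      · exact ⟨0, Nat.zero_le t, by rw [cnt_zero]; omega, by rw [cnt_zero]; omega⟩
      · obtain ⟨σ₂, σ₂', hfσ, hfσ', hcσ, hcσ', hnbr, _, _, _⟩ :=
          H1 u (cnt net cfg ζ u t - 1) (by omega)
        have hσt : σ₂ < t := lt_of_cnt_lt net cfg ζ
          (show cnt net cfg ζ u σ₂ < cnt net cfg ζ u t by omega)
        refine ⟨σ₂ + 1, hσt, by rw [cnt_succ, if_pos hfσ]; omega, ?_⟩
        have hnv : ¬ Fires net cfg ζ σ₂ v :=
          fun hv => not_fires_adj net cfg ζ hor σ₂ u v hadj hfσ hv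
        have e1 : cnt net cfg ζ v (σ₂ + 1) = cnt net cfg ζ v σ₂ := by
          rw [cnt_succ, if_neg hnv, Nat.add_zero]
        have hlt' : σ₂' < s' := lt_of_cnt_lt net cfg ζ'
          (show cnt net cfg ζ' u σ₂' < cnt net cfg ζ' u s' by omega)
        have h2 := cnt_mono net cfg ζ' v (le_of_lt hlt')
        have h3 := hnbr v hadj.symm
        omega
    obtain ⟨σ, hσt, hcσu, hcσv⟩ := key
    obtain ⟨s₁, hs₁σ, hs₁t, hcs₁v⟩ := cnt_ivt net cfg ζ hσt hcσv hjk
    have hcs₁u : cnt net cfg ζ u s₁ = cnt net cfg ζ u t := by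
      have h1 := cnt_mono net cfg ζ u hs₁σ
      have h2 := cnt_mono net cfg ζ u hs₁t
      omega
    have hedge : (tr net cfg ζ s₁).2 u v = true := by
      rcases eq_or_lt_of_le hjk with heq | hlt
      · have e := edge_const net cfg ζ hs₁t
          (fun r h1 h2 => no_fires_of_cnt_eq net cfg ζ hs₁t hcs₁u h1 h2)
          (fun r h1 h2 => no_fires_of_cnt_eq net cfg ζ hs₁t
            (show cnt net cfg ζ v s₁ = cnt net cfg ζ v t by omega) h1 h2)
        rw [← e]
        exact hf.2 u hadj
      · obtain ⟨τ, hτt, hfτ, hcτ⟩ := exists_fires_of_lt_cnt net cfg ζ hlt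
        have hs₁τ : s₁ ≤ τ := by
          by_contra hc
          have := cnt_lt_of_fires net cfg ζ hfτ (not_le.mp hc)
          omega
        have hcτu : cnt net cfg ζ u τ = cnt net cfg ζ u t := by
          have h1 := cnt_mono net cfg ζ u hs₁τ
          have h2 := cnt_mono net cfg ζ u (le_of_lt hτt)
          omega
        have e := edge_const net cfg ζ hs₁τ
          (fun r h1 h2 => no_fires_of_cnt_eq net cfg ζ hs₁τ
            (show cnt net cfg ζ u s₁ = cnt net cfg ζ u τ by omega) h1 h2)
          (fun r h1 h2 => no_fires_of_cnt_eq net cfg ζ hs₁τ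
            (show cnt net cfg ζ v s₁ = cnt net cfg ζ v τ by omega) h1 h2)
        rw [← e]
        exact hfτ.2 u hadj
    have hcross : (tr net cfg ζ s₁).2 u v = (tr net cfg ζ' s').2 u v :=
      edge_eq_of_matched net cfg ζ ζ' hor u v hadj
        (by omega) (by omega)
        (fun m hm => H1 u m (by omega)) (fun m hm => H1 v m (by omega))
    have h1 : (tr net cfg ζ' s').2 v u = true := hfs'.2 v hadj.symm
    have h2 := hor_tr net cfg ζ' hor s' u v hadj
    rw [hcross, h2, h1] at hedge
    simp at hedge
  -- existence of the matching firing of v in ζ'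
  have hex : ∃ s', Fires net cfg ζ' s' v ∧ cnt net cfg ζ' v s' = cnt net cfg ζ v t := by
    by_contra hno
    push_neg at hno
    have bound : ∀ τ, cnt net cfg ζ' v τ ≤ cnt net cfg ζ v t := by
      intro τ
      by_contra hb
      push_neg at hb
      obtain ⟨s'', _, h1, h2⟩ := exists_fires_of_lt_cnt net cfg ζ' hb
      exact hno s'' h1 h2
    have hva : ∃ a', cnt net cfg ζ' v a' = cnt net cfg ζ v t := by
      rcases Nat.eq_zero_or_pos (cnt net cfg ζ v t) with h0 | hpos
      · exact ⟨0, by rw [cnt_zero]; omega⟩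
      · obtain ⟨σ, σ', hfσ, hfσ', hcσ, hcσ', _, _, _, _⟩ :=
          H1 v (cnt net cfg ζ v t - 1) (by omega)
        exact ⟨σ' + 1, by rw [cnt_succ, if_pos hfσ']; omega⟩
    obtain ⟨a', ha'⟩ := hva
    have hub : ∀ u : I, net.G.Adj u v →
        ∃ b', cnt net cfg ζ' u b' = cnt net cfg ζ u t := by
      intro u hadj
      rcases Nat.eq_zero_or_pos (cnt net cfg ζ u t) with h0 | hpos
      · exact ⟨0, by rw [cnt_zero]; omega⟩
      · obtain ⟨σ, σ', hfσ, hfσ', hcσ, hcσ', _, _, _, _⟩ :=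
          H1 u (cnt net cfg ζ u t - 1) (by omega)
        exact ⟨σ' + 1, by rw [cnt_succ, if_pos hfσ']; omega⟩
    classical
    set N : Finset I := (hlf v).toFinset with hN
    set f : I → ℕ := fun u => if h : net.G.Adj u v then (hub u h).choose else 0 with hfdef
    set T0 : ℕ := max a' (N.sup f) with hT0
    have hT0v : cnt net cfg ζ' v T0 = cnt net cfg ζ v t := by
      have h1 := cnt_mono net cfg ζ' v (show a' ≤ T0 from le_max_left _ _)
      have h2 := bound T0
      omega
    have hT0u : ∀ u, net.G.Adj u v → cnt net cfg ζ' u T0 = cnt net cfg ζ u t := by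
      intro u hadj
      have hmem : u ∈ N := by
        rw [hN, Set.Finite.mem_toFinset]
        exact hadj.symm
      have hfu : f u = (hub u hadj).choose := by rw [hfdef]; simp [hadj]
      have h1 : f u ≤ T0 := le_trans (Finset.le_sup hmem) (le_max_right _ _)
      have h2 := cnt_mono net cfg ζ' u h1
      rw [hfu, (hub u hadj).choose_spec] at h2
      rcases eq_or_lt_of_le h2 with heq | hlt
      · exact heq.symm
      · exfalso
        obtain ⟨s'', hlt'', hf1, hf2⟩ := exists_fires_of_lt_cnt net cfg ζ' hlt
        exact SubB u hadj s'' hf1 hf2 (bound s'')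
    have happ : net.Applicable (tr net cfg ζ' T0) v := by
      intro u hadj
      have := edge_eq_of_matched net cfg ζ ζ' hor u v hadj
        (τ := t) (τ' := T0) (hT0u u hadj).symm hT0v.symm
        (fun m hm => H1 u m hm) (fun m hm => H1 v m hm)
      rw [← this]
      exact hf.2 u hadj
    obtain ⟨s', hs'ge, hfs', hcs'⟩ := eventual net cfg ζ' hor hfair' T0 v happ
    exact hno s' hfs' (by omega)
  obtain ⟨s', hfs', hcs'⟩ := hex
  have hcu' : ∀ u, net.G.Adj u v → cnt net cfg ζ' u s' = cnt net cfg ζ u t := by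
    intro u hadj
    rcases lt_trichotomy (cnt net cfg ζ' u s') (cnt net cfg ζ u t) with hlt | heq | hgt
    · exfalso
      obtain ⟨σ, σ', hfσ, hfσ', hcσ, hcσ', hnbr, _, _, _⟩ := H1 u _ hlt
      have hσ's' : s' < σ' := by
        rcases lt_trichotomy σ' s' with h | h | h
        · have := cnt_lt_of_fires net cfg ζ' hfσ' h
          omega
        · exfalso
          subst h
          exact not_fires_adj net cfg ζ' hor σ' u v hadj hfσ' hfs'
        · exact h
      have h1 : cnt net cfg ζ' v (s' + 1) = cnt net cfg ζ v t + 1 := by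
        rw [cnt_succ, if_pos hfs']
        omega
      have h2 := cnt_mono net cfg ζ' v (show s' + 1 ≤ σ' from hσ's')
      have h3 := hnbr v hadj.symm
      have hσt : σ < t := lt_of_cnt_lt net cfg ζ
        (show cnt net cfg ζ u σ < cnt net cfg ζ u t by omega)
      have h4 := cnt_mono net cfg ζ v (le_of_lt hσt)
      omega
    · exact heq
    · exfalso
      obtain ⟨s'', hlt'', h1, h2⟩ := exists_fires_of_lt_cnt net cfg ζ' hgt
      have h3 : cnt net cfg ζ' v s'' ≤ cnt net cfg ζ v t := by
        have := cnt_mono net cfg ζ' v (le_of_lt hlt'')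
        omega
      exact SubB u hadj s'' h1 h2 h3
  have hstv : (tr net cfg ζ t).1 v = (tr net cfg ζ' s').1 v :=
    state_eq_of_matched net cfg ζ ζ' v hcs'.symm (fun m hm => H1 v m hm)
  have hstu : ∀ u, net.G.Adj u v → (tr net cfg ζ t).1 u = (tr net cfg ζ' s').1 u :=
    fun u hadj => state_eq_of_matched net cfg ζ ζ' u (hcu' u hadj).symm
      (fun m hm => H1 u m hm)
  have hflip : net.flip v (tr net cfg ζ t).1 = net.flip v (tr net cfg ζ' s').1 :=
    hloc v _ _ hstv hstu
  exact ⟨t, s', hf, hfs', rfl, hcs', fun u h => (hcu' u h).symm, hstv, hstu, hflip⟩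

end Master
end FanPf

namespace FanPf
section Final

variable {I S : Type*} (net : FAN I S) (cfg : FanConfig I S) (ζ : ℕ → Set I)

lemma change_iff (i : I) (t : ℕ) :
    (net.traj ζ cfg (t + 1)).1 i ≠ (net.traj ζ cfg t).1 i ↔
      Fires net cfg ζ t i ∧
        (net.flip i (tr net cfg ζ t).1).1 ≠ (tr net cfg ζ t).1 i := by
  have h := state_succ net cfg ζ t i
  by_cases hh : Fires net cfg ζ t i
  · rw [if_pos hh] at h
    constructor
    · intro hne
      exact ⟨hh, by rw [← h]; exact hne⟩
    · intro ⟨_, hne⟩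
      show (tr net cfg ζ (t + 1)).1 i ≠ (tr net cfg ζ t).1 i
      rw [h]; exact hne
  · rw [if_neg hh] at h
    constructor
    · intro hne
      exact absurd h hne
    · intro ⟨h1, _⟩
      exact absurd h1 hh

/-- Indices of firings of `i` that change the state. -/
def ChangeIdx (i : I) : Set ℕ :=
  {k | ∃ s, Fires net cfg ζ s i ∧ cnt net cfg ζ i s = k ∧
    (net.flip i (tr net cfg ζ s).1).1 ≠ (tr net cfg ζ s).1 i}

end Final
end FanPf

/-- Flip automata networks have invariant histories: for any initial configuration, the
sequence of state values taken by each node (recording only actual changes, in order) is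
the same for any two fair update schedules. -/
theorem fan_invariant_histories {I S : Type*} (net : FAN I S)
    (hloc : ∀ i (s s' : I → S), s i = s' i → (∀ u, net.G.Adj u i → s u = s' u) →
      net.flip i s = net.flip i s')
    (hlf : ∀ v, (net.G.neighborSet v).Finite)
    (cfg : FanConfig I S)
    (hor : ∀ i j, net.G.Adj i j → cfg.2 i j = !cfg.2 j i)
    (ζ ζ' : ℕ → Set I)
    (hfair : ∀ i, {t | i ∈ ζ t}.Infinite)
    (hfair' : ∀ i, {t | i ∈ ζ' t}.Infinite)
    (i : I) (n : ℕ) :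
    (HasAtLeast (fun t => (net.traj ζ cfg (t + 1)).1 i ≠ (net.traj ζ cfg t).1 i) n ↔
      HasAtLeast (fun t => (net.traj ζ' cfg (t + 1)).1 i ≠ (net.traj ζ' cfg t).1 i) n) ∧
    (HasAtLeast (fun t => (net.traj ζ cfg (t + 1)).1 i ≠ (net.traj ζ cfg t).1 i) n →
      histVal (fun t => (net.traj ζ cfg t).1 i) n =
        histVal (fun t => (net.traj ζ' cfg t).1 i) n) := by
  classical
  set P : ℕ → Prop := fun t => (net.traj ζ cfg (t + 1)).1 i ≠ (net.traj ζ cfg t).1 i with hP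
  set P' : ℕ → Prop := fun t => (net.traj ζ' cfg (t + 1)).1 i ≠ (net.traj ζ' cfg t).1 i with hP'
  have M := FanPf.master net cfg ζ ζ' hloc hlf hor hfair'
  have M' := FanPf.master net cfg ζ' ζ hloc hlf hor hfair
  -- the change-index sets of the two runs coincide
  have hKK' : FanPf.ChangeIdx net cfg ζ i = FanPf.ChangeIdx net cfg ζ' i := by
    ext k
    constructor
    · rintro ⟨s, hf, hc, hne⟩
      have hm := M s i hf
      rw [hc] at hm
      obtain ⟨σ, σ', h1, h2, h3, h4, _, hstv, _, hflip⟩ := hm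
      have hσ : σ = s := FanPf.fires_time_unique net cfg ζ h1 hf (h3.trans hc.symm)
      subst hσ
      exact ⟨σ', h2, h4, by rw [← hflip, ← hstv]; exact hne⟩
    · rintro ⟨s, hf, hc, hne⟩
      have hm := M' s i hf
      rw [hc] at hm
      obtain ⟨σ, σ', h1, h2, h3, h4, _, hstv, _, hflip⟩ := hm
      have hσ : σ = s := FanPf.fires_time_unique net cfg ζ' h1 hf (h3.trans hc.symm)
      subst hσ
      exact ⟨σ', h2, h4, by rw [← hflip, ← hstv]; exact hne⟩
  have hPfire : ∀ t, P t → FanPf.Fires net cfg ζ t i ∧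
      (net.flip i (FanPf.tr net cfg ζ t).1).1 ≠ (FanPf.tr net cfg ζ t).1 i :=
    fun t ht => (FanPf.change_iff net cfg ζ i t).mp ht
  have hP'fire : ∀ t, P' t → FanPf.Fires net cfg ζ' t i ∧
      (net.flip i (FanPf.tr net cfg ζ' t).1).1 ≠ (FanPf.tr net cfg ζ' t).1 i :=
    fun t ht => (FanPf.change_iff net cfg ζ' i t).mp ht
  have himg : (fun t => FanPf.cnt net cfg ζ i t) '' {t | P t} = FanPf.ChangeIdx net cfg ζ i := by
    ext k
    constructor
    · rintro ⟨t, ht, rfl⟩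
      obtain ⟨h1, h2⟩ := hPfire t ht
      exact ⟨t, h1, rfl, h2⟩
    · rintro ⟨s, h1, h2, h3⟩
      exact ⟨s, (FanPf.change_iff net cfg ζ i s).mpr ⟨h1, h3⟩, h2⟩
  have himg' : (fun t => FanPf.cnt net cfg ζ' i t) '' {t | P' t} = FanPf.ChangeIdx net cfg ζ' i := by
    ext k
    constructor
    · rintro ⟨t, ht, rfl⟩
      obtain ⟨h1, h2⟩ := hP'fire t ht
      exact ⟨t, h1, rfl, h2⟩
    · rintro ⟨s, h1, h2, h3⟩
      exact ⟨s, (FanPf.change_iff net cfg ζ' i s).mpr ⟨h1, h3⟩, h2⟩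
  have hinj : Set.InjOn (fun t => FanPf.cnt net cfg ζ i t) {t | P t} := by
    intro a ha b hb hab
    exact FanPf.fires_time_unique net cfg ζ (hPfire a ha).1 (hPfire b hb).1 hab
  have hinj' : Set.InjOn (fun t => FanPf.cnt net cfg ζ' i t) {t | P' t} := by
    intro a ha b hb hab
    exact FanPf.fires_time_unique net cfg ζ' (hP'fire a ha).1 (hP'fire b hb).1 hab
  have hInfIff : {t | P t}.Infinite ↔ (FanPf.ChangeIdx net cfg ζ i).Infinite := by
    rw [← himg, Set.infinite_image_iff hinj]
  have hInfIff' : {t | P' t}.Infinite ↔ (FanPf.ChangeIdx net cfg ζ' i).Infinite := by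
    rw [← himg', Set.infinite_image_iff hinj']
  have hNcard : {t | P t}.ncard = (FanPf.ChangeIdx net cfg ζ i).ncard := by
    rw [← himg, Set.ncard_image_of_injOn hinj]
  have hNcard' : {t | P' t}.ncard = (FanPf.ChangeIdx net cfg ζ' i).ncard := by
    rw [← himg', Set.ncard_image_of_injOn hinj']
  have hIff : HasAtLeast P n ↔ HasAtLeast P' n := by
    unfold HasAtLeast
    rw [hInfIff, hInfIff', hNcard, hNcard', hKK']
  refine ⟨hIff, ?_⟩
  intro hHA
  rcases n with _ | m
  · simp only [histVal]
    rfl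
  · have hHA' : HasAtLeast P' (m + 1) := hIff.mp hHA
    have hval : ∀ hf : (setOf P).Finite, m < hf.toFinset.card := by
      intro hf
      rcases hHA with h | h
      · exact absurd hf h
      · change m + 1 < Set.ncard (setOf _) at h; rw [Set.ncard_eq_toFinset_card _ hf] at h
        omega
    have hval' : ∀ hf : (setOf P').Finite, m < hf.toFinset.card := by
      intro hf
      rcases hHA' with h | h
      · exact absurd hf h
      · change m + 1 < Set.ncard (setOf _) at h; rw [Set.ncard_eq_toFinset_card _ hf] at h
        omega
    have hPtm : P (Nat.nth P m) := Nat.nth_mem m hval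
    have hPtm' : P' (Nat.nth P' m) := Nat.nth_mem m hval'
    have hcount : Nat.count P (Nat.nth P m) = m := Nat.count_nth hval
    have hcount' : Nat.count P' (Nat.nth P' m) = m := Nat.count_nth hval'
    -- transfer counts through the counting map
    have hct : Nat.count P (Nat.nth P m) =
        Nat.count (fun k => k ∈ FanPf.ChangeIdx net cfg ζ i)
          (FanPf.cnt net cfg ζ i (Nat.nth P m)) := by
      rw [Nat.count_eq_card_filter_range, Nat.count_eq_card_filter_range]
      apply Finset.card_bij (fun s _ => FanPf.cnt net cfg ζ i s)
      · intro a ha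
        rw [Finset.mem_filter, Finset.mem_range] at ha
        rw [Finset.mem_filter, Finset.mem_range]
        obtain ⟨h1, h2⟩ := hPfire a ha.2
        exact ⟨FanPf.cnt_lt_of_fires net cfg ζ h1 ha.1, a, h1, rfl, h2⟩
      · intro a ha b hb hab
        rw [Finset.mem_filter] at ha hb
        exact FanPf.fires_time_unique net cfg ζ (hPfire a ha.2).1 (hPfire b hb.2).1 hab
      · intro k hk
        rw [Finset.mem_filter, Finset.mem_range] at hk
        obtain ⟨hklt, s, h1, h2, h3⟩ := hk
        refine ⟨s, ?_, h2⟩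
        rw [Finset.mem_filter, Finset.mem_range]
        exact ⟨FanPf.lt_of_cnt_lt net cfg ζ
          (show FanPf.cnt net cfg ζ i s < FanPf.cnt net cfg ζ i (Nat.nth P m) by omega),
          (FanPf.change_iff net cfg ζ i s).mpr ⟨h1, h3⟩⟩
    have hct' : Nat.count P' (Nat.nth P' m) =
        Nat.count (fun k => k ∈ FanPf.ChangeIdx net cfg ζ i)
          (FanPf.cnt net cfg ζ' i (Nat.nth P' m)) := by
      rw [hKK', Nat.count_eq_card_filter_range, Nat.count_eq_card_filter_range]
      apply Finset.card_bij (fun s _ => FanPf.cnt net cfg ζ' i s)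
      · intro a ha
        rw [Finset.mem_filter, Finset.mem_range] at ha
        rw [Finset.mem_filter, Finset.mem_range]
        obtain ⟨h1, h2⟩ := hP'fire a ha.2
        exact ⟨FanPf.cnt_lt_of_fires net cfg ζ' h1 ha.1, a, h1, rfl, h2⟩
      · intro a ha b hb hab
        rw [Finset.mem_filter] at ha hb
        exact FanPf.fires_time_unique net cfg ζ' (hP'fire a ha.2).1 (hP'fire b hb.2).1 hab
      · intro k hk
        rw [Finset.mem_filter, Finset.mem_range] at hk
        obtain ⟨hklt, s, h1, h2, h3⟩ := hk
        refine ⟨s, ?_, h2⟩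
        rw [Finset.mem_filter, Finset.mem_range]
        exact ⟨FanPf.lt_of_cnt_lt net cfg ζ'
          (show FanPf.cnt net cfg ζ' i s < FanPf.cnt net cfg ζ' i (Nat.nth P' m) by omega),
          (FanPf.change_iff net cfg ζ' i s).mpr ⟨h1, h3⟩⟩
    have hQtm : FanPf.cnt net cfg ζ i (Nat.nth P m) ∈ FanPf.ChangeIdx net cfg ζ i := by
      obtain ⟨h1, h2⟩ := hPfire _ hPtm
      exact ⟨_, h1, rfl, h2⟩
    have hQtm' : FanPf.cnt net cfg ζ' i (Nat.nth P' m) ∈ FanPf.ChangeIdx net cfg ζ i := by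
      rw [hKK']
      obtain ⟨h1, h2⟩ := hP'fire _ hPtm'
      exact ⟨_, h1, rfl, h2⟩
    have hnthQ : Nat.nth (fun k => k ∈ FanPf.ChangeIdx net cfg ζ i) m =
        FanPf.cnt net cfg ζ i (Nat.nth P m) := by
      have h := Nat.nth_count (p := fun k => k ∈ FanPf.ChangeIdx net cfg ζ i) hQtm
      rwa [← hct, hcount] at h
    have hnthQ' : Nat.nth (fun k => k ∈ FanPf.ChangeIdx net cfg ζ i) m =
        FanPf.cnt net cfg ζ' i (Nat.nth P' m) := by
      have h := Nat.nth_count (p := fun k => k ∈ FanPf.ChangeIdx net cfg ζ i) hQtm'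
      rwa [← hct', hcount'] at h
    have hθeq : FanPf.cnt net cfg ζ i (Nat.nth P m) = FanPf.cnt net cfg ζ' i (Nat.nth P' m) :=
      hnthQ.symm.trans hnthQ'
    -- now compute the history values
    have hftm := (hPfire _ hPtm).1
    have hftm' := (hP'fire _ hPtm').1
    have hm := M (Nat.nth P m) i hftm
    obtain ⟨σ, σ', h1, h2, h3, h4, _, _, _, hflip⟩ := hm
    have hσ : σ = Nat.nth P m := FanPf.fires_time_unique net cfg ζ h1 hftm h3
    subst hσ
    have hσ' : σ' = Nat.nth P' m :=
      FanPf.fires_time_unique net cfg ζ' h2 hftm' (h4.trans hθeq)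
    subst hσ'
    have e1 : (net.traj ζ cfg (Nat.nth P m + 1)).1 i =
        (net.flip i (FanPf.tr net cfg ζ (Nat.nth P m)).1).1 := by
      have := FanPf.state_succ net cfg ζ (Nat.nth P m) i
      rwa [if_pos hftm] at this
    have e2 : (net.traj ζ' cfg (Nat.nth P' m + 1)).1 i =
        (net.flip i (FanPf.tr net cfg ζ' (Nat.nth P' m)).1).1 := by
      have := FanPf.state_succ net cfg ζ' (Nat.nth P' m) i
      rwa [if_pos hftm'] at this
    simp only [histVal]
    calc (net.traj ζ cfg (Nat.nth (fun t => (net.traj ζ cfg (t+1)).1 i ≠ (net.traj ζ cfg t).1 i) m + 1)).1 i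
        = (net.traj ζ cfg (Nat.nth P m + 1)).1 i := by rw [← hP]
      _ = (net.traj ζ' cfg (Nat.nth P' m + 1)).1 i := by rw [e1, e2, hflip]
      _ = (net.traj ζ' cfg (Nat.nth (fun t => (net.traj ζ' cfg (t+1)).1 i ≠ (net.traj ζ' cfg t).1 i) m + 1)).1 i := by rw [← hP']
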